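/- For every d, t ∈ ℕ with 1 ≤ t ≤ d and every ξ ∈ 𝕋^d one has | (1/|S_t|) Σ_{x ∈ S_t} (−1)^{Σ_{i ∈ V_ξ} x_i} − (1/|S_t|) Σ_{x ∈ S_t} (−1)^{Σ_{i=1}^d x_i} | ≤ 4 · (t/d) · Σ_{i=1}^d cos²(π ξ_i). -/

import Mathlib

open Finset

noncomputable section

/-- `S_t = {x ∈ {-1,0,1}^d : Σ |x_i| = t}`. -/
def sphereS (d t : ℕ) : Finset (Fin d → ℤ) :=
  (Finset.Icc (fun _ => (-1 : ℤ)) (fun _ => (1 : ℤ))).filter fun y => ∑ i, |y i| = (t : ℤ)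

/-- `V_ξ = {i ∈ {1,…,d} : cos(2π ξ_i) < 0}`. -/
def Vset (d : ℕ) (ξ : Fin d → ℝ) : Finset (Fin d) :=
  Finset.univ.filter fun i => Real.cos (2 * Real.pi * ξ i) < 0

lemma mem_sphereS {d t : ℕ} {x : Fin d → ℤ} :
    x ∈ sphereS d t ↔ (∀ i, -1 ≤ x i ∧ x i ≤ 1) ∧ ∑ i, |x i| = (t : ℤ) := by
  simp [sphereS, Finset.mem_filter, Finset.mem_Icc, Pi.le_def, forall_and]

lemma sphereS_nonempty {d t : ℕ} (ht : t ≤ d) : (sphereS d t).Nonempty := by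
  refine ⟨fun i => if (i : ℕ) < t then 1 else 0, ?_⟩
  rw [mem_sphereS]
  constructor
  · intro i; constructor <;> (split <;> norm_num)
  · have h1 : ∀ i : Fin d, |if (i : ℕ) < t then (1:ℤ) else 0|
        = if (i : ℕ) < t then (1:ℤ) else 0 := by
      intro i; split <;> norm_num
    simp only [h1]
    rw [Fin.sum_univ_eq_sum_range (fun i => if i < t then (1:ℤ) else 0) d]
    rw [← Finset.sum_subset (Finset.range_subset_range.2 ht)
      (by intro i _ hi; simp at hi; simp [hi])]
    rw [Finset.sum_ite_of_true (fun i hi => Finset.mem_range.1 hi)]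
    simp

lemma sum_abs_coord_eq {d t : ℕ} (i j : Fin d) :
    ∑ x ∈ sphereS d t, |x i| = ∑ x ∈ sphereS d t, |x j| := by
  refine Finset.sum_nbij' (fun x => x ∘ Equiv.swap i j) (fun x => x ∘ Equiv.swap i j)
    ?_ ?_ ?_ ?_ ?_
  · intro x hx
    rw [mem_sphereS] at hx ⊢
    exact ⟨fun k => hx.1 _, by rw [← hx.2]; exact Equiv.sum_comp (Equiv.swap i j) (fun k => |x k|)⟩
  · intro x hx
    rw [mem_sphereS] at hx ⊢
    exact ⟨fun k => hx.1 _, by rw [← hx.2]; exact Equiv.sum_comp (Equiv.swap i j) (fun k => |x k|)⟩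
  · intro x _; funext k; simp [Function.comp, Equiv.swap_apply_self]
  · intro x _; funext k; simp [Function.comp, Equiv.swap_apply_self]
  · intro x _; simp [Function.comp, Equiv.swap_apply_right]

lemma d_mul_sum_abs {d t : ℕ} (i : Fin d) :
    (d : ℤ) * ∑ x ∈ sphereS d t, |x i| = ((sphereS d t).card : ℤ) * t := by
  have h1 : ∑ j : Fin d, ∑ x ∈ sphereS d t, |x j|
      = (d : ℤ) * ∑ x ∈ sphereS d t, |x i| := by
    rw [Finset.sum_congr rfl (fun j _ => sum_abs_coord_eq j i)]
    simp [mul_comm]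
  rw [← h1, Finset.sum_comm]
  rw [Finset.sum_congr rfl (fun x hx => (mem_sphereS.1 hx).2)]
  simp [mul_comm]

lemma term_bound {d : ℕ} (V : Finset (Fin d)) (x : Fin d → ℤ) :
    |(-1:ℝ) ^ (∑ i ∈ V, x i) - (-1:ℝ) ^ (∑ i, x i)|
      ≤ 2 * ((∑ i ∈ Vᶜ, |x i| : ℤ) : ℝ) := by
  have hs : (0:ℤ) ≤ ∑ i ∈ Vᶜ, |x i| := Finset.sum_nonneg fun i _ => abs_nonneg _
  rcases eq_or_lt_of_le hs with h0 | h1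
  · have hz : ∀ i ∈ Vᶜ, x i = 0 := by
      intro i hi
      have := (Finset.sum_eq_zero_iff_of_nonneg (fun i _ => abs_nonneg (x i))).1 h0.symm i hi
      exact abs_eq_zero.1 this
    have : ∑ i, x i = ∑ i ∈ V, x i := by
      rw [← Finset.sum_add_sum_compl V, Finset.sum_eq_zero hz, add_zero]
    rw [this, sub_self, abs_zero, ← h0]
    norm_num
  · have h2 : (1:ℝ) ≤ ((∑ i ∈ Vᶜ, |x i| : ℤ) : ℝ) := by exact_mod_cast h1
    have hb : ∀ n : ℤ, |(-1:ℝ) ^ n| = 1 := by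
      intro n
      rcases Int.even_or_odd n with h | h
      · rw [h.neg_one_zpow, abs_one]
      · rw [h.neg_one_zpow, abs_neg, abs_one]
    calc |(-1:ℝ) ^ (∑ i ∈ V, x i) - (-1:ℝ) ^ (∑ i, x i)|
        ≤ |(-1:ℝ) ^ (∑ i ∈ V, x i)| + |(-1:ℝ) ^ (∑ i, x i)| := abs_sub _ _
      _ = 2 := by rw [hb, hb]; norm_num
      _ ≤ 2 * ((∑ i ∈ Vᶜ, |x i| : ℤ) : ℝ) := by linarith

/-- Lemma 4.6: for `1 ≤ t ≤ d` and every `ξ ∈ 𝕋^d`,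
`| |S_t|⁻¹ Σ_{x ∈ S_t} (-1)^{Σ_{i ∈ V_ξ} x_i} - |S_t|⁻¹ Σ_{x ∈ S_t} (-1)^{Σ_{i=1}^d x_i} |
  ≤ 4 (t/d) Σ cos²(π ξ_i)`. -/
theorem signed_sums_diff_bound (d t : ℕ) (ht0 : 1 ≤ t) (ht : t ≤ d) (ξ : Fin d → ℝ) :
    |((sphereS d t).card : ℝ)⁻¹ * (∑ x ∈ sphereS d t, (-1 : ℝ) ^ (∑ i ∈ Vset d ξ, x i)) -
        ((sphereS d t).card : ℝ)⁻¹ * (∑ x ∈ sphereS d t, (-1 : ℝ) ^ (∑ i, x i))| ≤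
      4 * ((t : ℝ) / d) * ∑ i, Real.cos (Real.pi * ξ i) ^ 2 := by
  have hd : 0 < d := ht0.trans ht
  have hdR : (0:ℝ) < d := by exact_mod_cast hd
  have hS : (sphereS d t).Nonempty := sphereS_nonempty ht
  set c : ℝ := ((sphereS d t).card : ℝ) with hc_def
  have hc : 0 < c := hc_def ▸ Nat.cast_pos.2 (Finset.card_pos.2 hS)
  set V := Vset d ξ with hV
  -- bound on card of complement
  have hW : (Vᶜ.card : ℝ) ≤ 2 * ∑ i, Real.cos (Real.pi * ξ i) ^ 2 := by
    have h1 : ∀ i ∈ Vᶜ, (1:ℝ)/2 ≤ Real.cos (Real.pi * ξ i) ^ 2 := by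
      intro i hi
      have hcos : 0 ≤ Real.cos (2 * Real.pi * ξ i) := by
        simp [hV, Vset] at hi; exact hi
      rw [show 2 * Real.pi * ξ i = 2 * (Real.pi * ξ i) by ring,
        Real.cos_two_mul] at hcos
      linarith
    have h2 : (Vᶜ.card : ℝ) * (1/2) ≤ ∑ i ∈ Vᶜ, Real.cos (Real.pi * ξ i) ^ 2 := by
      have := Finset.sum_le_sum h1
      simpa [Finset.sum_const, nsmul_eq_mul] using this
    have h3 : ∑ i ∈ Vᶜ, Real.cos (Real.pi * ξ i) ^ 2 ≤ ∑ i, Real.cos (Real.pi * ξ i) ^ 2 :=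
      Finset.sum_le_sum_of_subset_of_nonneg (Finset.subset_univ _)
        (fun i _ _ => sq_nonneg _)
    linarith
  -- per-coordinate sums
  have hcoord : ∀ i : Fin d, ((∑ x ∈ sphereS d t, |x i| : ℤ) : ℝ) = c * t / d := by
    intro i
    have h := d_mul_sum_abs (t := t) i
    have h' : (d : ℝ) * ((∑ x ∈ sphereS d t, |x i| : ℤ) : ℝ) = c * t := by
      rw [hc_def]; exact_mod_cast h
    rw [eq_div_iff hdR.ne']
    linarith
  calc |c⁻¹ * (∑ x ∈ sphereS d t, (-1 : ℝ) ^ (∑ i ∈ V, x i)) -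
        c⁻¹ * (∑ x ∈ sphereS d t, (-1 : ℝ) ^ (∑ i, x i))|
      = c⁻¹ * |∑ x ∈ sphereS d t,
          ((-1 : ℝ) ^ (∑ i ∈ V, x i) - (-1 : ℝ) ^ (∑ i, x i))| := by
        rw [← mul_sub, abs_mul, abs_of_pos (inv_pos.2 hc), Finset.sum_sub_distrib]
    _ ≤ c⁻¹ * ∑ x ∈ sphereS d t,
          |(-1 : ℝ) ^ (∑ i ∈ V, x i) - (-1 : ℝ) ^ (∑ i, x i)| := by
        exact mul_le_mul_of_nonneg_left (Finset.abs_sum_le_sum_abs _ _) (inv_pos.2 hc).le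
    _ ≤ c⁻¹ * ∑ x ∈ sphereS d t, 2 * ((∑ i ∈ Vᶜ, |x i| : ℤ) : ℝ) := by
        exact mul_le_mul_of_nonneg_left
          (Finset.sum_le_sum fun x _ => term_bound V x) (inv_pos.2 hc).le
    _ = c⁻¹ * (2 * ∑ i ∈ Vᶜ, ((∑ x ∈ sphereS d t, |x i| : ℤ) : ℝ)) := by
        rw [← Finset.mul_sum]
        congr 1
        push_cast
        rw [Finset.sum_comm]
    _ = c⁻¹ * (2 * (Vᶜ.card * (c * t / d))) := by
        rw [Finset.sum_congr rfl (fun i _ => hcoord i), Finset.sum_const,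
          nsmul_eq_mul]
    _ = 2 * (t / d) * Vᶜ.card := by field_simp
    _ ≤ 4 * ((t : ℝ) / d) * ∑ i, Real.cos (Real.pi * ξ i) ^ 2 := by
        have htd : 0 ≤ (t:ℝ)/d := by positivity
        calc 2 * ((t:ℝ) / d) * Vᶜ.card
            ≤ 2 * ((t:ℝ)/d) * (2 * ∑ i, Real.cos (Real.pi * ξ i) ^ 2) := by
              apply mul_le_mul_of_nonneg_left hW (by positivity)
          _ = 4 * ((t : ℝ) / d) * ∑ i, Real.cos (Real.pi * ξ i) ^ 2 := by ring
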